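/- arXiv:1510.05360 — 5 statements merged into one kernel-verified Lean document; each statement's English description precedes it below -/
import Mathlib

section
/- If G is a finite simple graph possessing at least one edge and k ≥ 1 is a natural number, then the k-independent graph I_k(G) is not a regular graph; that is, there is no natural number d such that every vertex of I_k(G) has degree d. -/
/-- A finset of vertices is independent if no two of its members are adjacent. -/
def IsIndep {V : Type*} (G : SimpleGraph V) (s : Finset V) : Prop :=
  ∀ u ∈ s, ∀ v ∈ s, ¬ G.Adj u v

/-- The `k`-independent graph of `G`: vertices are the independent sets of cardinality at most
`k`, two of them adjacent iff one is obtained from the other by adding a single vertex. -/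
def indepGraph {V : Type*} (G : SimpleGraph V) (k : ℕ) :
    SimpleGraph {s : Finset V // IsIndep G s ∧ s.card ≤ k} where
  Adj A B := (A.1 ⊆ B.1 ∧ B.1.card = A.1.card + 1) ∨ (B.1 ⊆ A.1 ∧ A.1.card = B.1.card + 1)
  symm := by
    constructor; rintro A B (⟨h1, h2⟩ | ⟨h1, h2⟩)
    · exact Or.inr ⟨h1, h2⟩
    · exact Or.inl ⟨h1, h2⟩
  loopless := by
    constructor; rintro A (⟨_, h⟩ | ⟨_, h⟩) <;> omega

instance {V : Type*} [DecidableEq V] (G : SimpleGraph V) [DecidableRel G.Adj] :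
    DecidablePred (IsIndep G) := fun s => by unfold IsIndep; infer_instance

instance {V : Type*} [DecidableEq V] (G : SimpleGraph V) (k : ℕ) :
    DecidableRel (indepGraph G k).Adj := fun A B =>
  inferInstanceAs (Decidable ((A.1 ⊆ B.1 ∧ B.1.card = A.1.card + 1) ∨
    (B.1 ⊆ A.1 ∧ A.1.card = B.1.card + 1)))

theorem indepGraph_not_regular {V : Type*} [Fintype V] [DecidableEq V] (G : SimpleGraph V)
    [DecidableRel G.Adj] (k : ℕ) (hk : 1 ≤ k) (he : ∃ u v, G.Adj u v) :
    ¬ ∃ d : ℕ, ∀ A, (indepGraph G k).degree A = d := by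
  rintro ⟨d, hd⟩
  obtain ⟨u, v, huv⟩ := he
  have hne : u ≠ v := G.ne_of_adj huv
  have hsing : ∀ w : V, IsIndep G {w} := by
    intro w a ha b hb
    simp only [Finset.mem_singleton] at ha hb
    subst ha; subst hb; exact G.loopless.irrefl _
  set A0 : {s : Finset V // IsIndep G s ∧ s.card ≤ k} :=
    ⟨∅, by intro a ha; simp at ha, by simp⟩ with hA0
  set A1 : {s : Finset V // IsIndep G s ∧ s.card ≤ k} :=
    ⟨{u}, hsing u, by simpa using hk⟩ with hA1
  -- degree of A0 is at least |V|
  have h0 : Fintype.card V ≤ (indepGraph G k).degree A0 := by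
    rw [← SimpleGraph.card_neighborFinset_eq_degree]
    rw [← Finset.card_univ]
    apply Finset.card_le_card_of_injOn
      (fun w => (⟨{w}, hsing w,
          by simpa using hk⟩ : {s : Finset V // IsIndep G s ∧ s.card ≤ k}))
    · intro w _
      rw [Finset.mem_coe, SimpleGraph.mem_neighborFinset]
      left
      constructor
      · simp [hA0]
      · simp [hA0]
    · intro a _ b _ h
      have : ({a} : Finset V) = {b} := congrArg Subtype.val h
      simpa using this
  -- degree of A1 is at most |V| - 1
  have h1 : (indepGraph G k).degree A1 ≤ Fintype.card V - 1 := by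
    rw [← SimpleGraph.card_neighborFinset_eq_degree]
    have hcard : (Finset.univ.erase v).card = Fintype.card V - 1 := by
      rw [Finset.card_erase_of_mem (Finset.mem_univ v), Finset.card_univ]
    rw [← hcard]
    apply Finset.card_le_card_of_injOn
      (fun B => if h : (B.1.erase u).Nonempty then h.choose else u)
    · intro B hB
      rw [Finset.mem_coe, SimpleGraph.mem_neighborFinset] at hB
      rcases hB with ⟨hsub, hc⟩ | ⟨hsub, hc⟩
      · -- {u} ⊆ B, card B = 2
        simp only [hA1] at hsub hc
        have hu : u ∈ B.1 := hsub (Finset.mem_singleton_self u)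
        have hN : (B.1.erase u).Nonempty := by
          rw [← Finset.card_pos, Finset.card_erase_of_mem hu]
          simp at hc; omega
        simp only [dif_pos hN]
        have hmem := hN.choose_spec
        have hne' : hN.choose ≠ u := Finset.ne_of_mem_erase hmem
        have hinB : hN.choose ∈ B.1 := Finset.mem_of_mem_erase hmem
        have : hN.choose ≠ v := by
          intro hvv
          exact B.2.1 u hu hN.choose hinB (hvv ▸ huv)
        exact Finset.mem_erase.2 ⟨this, Finset.mem_univ _⟩
      · -- B ⊆ {u}, card {u} = card B + 1, so B = ∅
        simp only [hA1] at hsub hc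
        have hB0 : B.1 = ∅ := Finset.card_eq_zero.mp (by
          simp only [Finset.card_singleton] at hc; omega)
        have hN : ¬ (B.1.erase u).Nonempty := by
          rw [hB0]; simp
        simp only [dif_neg hN]
        exact Finset.mem_erase.2 ⟨hne, Finset.mem_univ _⟩
    · intro B hB B' hB' hfeq
      rw [Finset.mem_coe, SimpleGraph.mem_neighborFinset] at hB hB'
      have key : ∀ C : {s : Finset V // IsIndep G s ∧ s.card ≤ k},
          (indepGraph G k).Adj A1 C →
          (C.1 = ∅ ∧ ¬(C.1.erase u).Nonempty) ∨
          (∃ h : (C.1.erase u).Nonempty, C.1 = {u, h.choose}) := by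
        intro C hC
        rcases hC with ⟨hsub, hc⟩ | ⟨hsub, hc⟩
        · simp only [hA1] at hsub hc
          have hu : u ∈ C.1 := hsub (Finset.mem_singleton_self u)
          simp only [Finset.card_singleton] at hc
          have hN : (C.1.erase u).Nonempty := by
            rw [← Finset.card_pos, Finset.card_erase_of_mem hu]; omega
          right
          refine ⟨hN, ?_⟩
          have hmem := hN.choose_spec
          have hsub2 : ({u, hN.choose} : Finset V) ⊆ C.1 := by
            intro x hx
            rcases Finset.mem_insert.1 hx with h | h
            · exact h ▸ hu
            · exact Finset.mem_of_mem_erase (Finset.mem_singleton.1 h ▸ hmem)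
          refine (Finset.eq_of_subset_of_card_le hsub2 ?_).symm
          rw [Finset.card_insert_of_notMem (by
            simp only [Finset.mem_singleton]
            exact fun h => (Finset.ne_of_mem_erase hmem) h.symm)]
          simp [hc]
        · simp only [hA1] at hsub hc
          have hC0 : C.1 = ∅ := Finset.card_eq_zero.mp (by
            simp only [Finset.card_singleton] at hc; omega)
          left
          exact ⟨hC0, by rw [hC0]; simp⟩
      rcases key B hB with ⟨hB0, hBN⟩ | ⟨hBN, hBeq⟩ <;>
        rcases key B' hB' with ⟨hB'0, hB'N⟩ | ⟨hB'N, hB'eq⟩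
      · exact Subtype.ext (hB0.trans hB'0.symm)
      · simp only [dif_neg hBN, dif_pos hB'N] at hfeq
        exact absurd hfeq.symm (Finset.ne_of_mem_erase hB'N.choose_spec)
      · simp only [dif_pos hBN, dif_neg hB'N] at hfeq
        exact absurd hfeq (Finset.ne_of_mem_erase hBN.choose_spec)
      · simp only [dif_pos hBN, dif_pos hB'N] at hfeq
        apply Subtype.ext
        rw [hBeq, hB'eq, hfeq]
  have e0 := hd A0
  have e1 := hd A1
  have hposV : 1 ≤ Fintype.card V := Fintype.card_pos_iff.2 ⟨u⟩
  omega
end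

section
/- For every integer n ≥ 1, let e(G) and o(G) denote the numbers of independent sets of even and odd cardinality of a graph G, respectively (the empty set counts as even). Then for paths: e(P_{3n−2}) − o(P_{3n−2}) = 0, e(P_{3n−1}) − o(P_{3n−1}) = (−1)^n, and e(P_{3n}) − o(P_{3n}) = (−1)^n. -/
/-- The number of independent sets of even cardinality minus the number of independent sets of
odd cardinality, i.e. the value of the independence polynomial at -1. -/
noncomputable def evenOddDiff {V : Type*} (G : SimpleGraph V) : ℤ :=
  (Nat.card {s : Finset V // IsIndep G s ∧ Even s.card} : ℤ) -
    (Nat.card {s : Finset V // IsIndep G s ∧ Odd s.card} : ℤ)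

open Finset

/-- Subsets of `range m` with no two consecutive elements. -/
def Aset (m : ℕ) : Finset (Finset ℕ) :=
  (Finset.range m).powerset.filter (fun s => ∀ i ∈ s, i + 1 ∉ s)

lemma mem_Aset {m : ℕ} {s : Finset ℕ} :
    s ∈ Aset m ↔ s ⊆ Finset.range m ∧ ∀ i ∈ s, i + 1 ∉ s := by
  simp [Aset]

/-- Signed count of independent sets of the path on `m` vertices. -/
def g (m : ℕ) : ℤ := ∑ s ∈ Aset m, (-1) ^ s.card

lemma g_rec (m : ℕ) : g (m + 2) = g (m + 1) - g m := by
  have hsplit := Finset.sum_filter_add_sum_filter_not (Aset (m + 2))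
    (fun s => m + 1 ∈ s) (fun s => ((-1 : ℤ)) ^ s.card)
  have hA : (Aset (m + 2)).filter (fun s => ¬ m + 1 ∈ s) = Aset (m + 1) := by
    ext s
    simp only [mem_filter, mem_Aset]
    constructor
    · rintro ⟨⟨hsub, hind⟩, hnot⟩
      refine ⟨fun x hx => ?_, hind⟩
      have hx2 := hsub hx
      simp only [mem_range] at hx2 ⊢
      have : x ≠ m + 1 := fun h => hnot (h ▸ hx)
      omega
    · rintro ⟨hsub, hind⟩
      refine ⟨⟨hsub.trans (by intro x; simp only [mem_range]; omega), hind⟩, fun h => ?_⟩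
      have := hsub h
      simp at this
  have hB : ∑ s ∈ (Aset (m + 2)).filter (fun s => m + 1 ∈ s), ((-1 : ℤ)) ^ s.card
      = ∑ t ∈ Aset m, ((-1 : ℤ)) ^ (t.card + 1) := by
    apply Finset.sum_bij' (fun s _ => s.erase (m + 1)) (fun t _ => insert (m + 1) t)
    case hi =>
      rintro s hs
      rw [mem_filter, mem_Aset] at hs
      obtain ⟨⟨hsub, hind⟩, hmem⟩ := hs
      have hmnot : m ∉ s := fun hm => hind m hm hmem
      rw [mem_Aset]
      refine ⟨fun x hx => ?_, fun i hi hi1 =>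
        hind i (mem_of_mem_erase hi) (mem_of_mem_erase hi1)⟩
      rw [mem_erase] at hx
      have hx2 := hsub hx.2
      simp only [mem_range] at hx2 ⊢
      have : x ≠ m := fun h => hmnot (h ▸ hx.2)
      omega
    case hj =>
      rintro t ht
      rw [mem_Aset] at ht
      obtain ⟨hsub, hind⟩ := ht
      have hnot : m + 1 ∉ t := fun h => by have := hsub h; simp at this
      rw [mem_filter, mem_Aset]
      refine ⟨⟨?_, ?_⟩, mem_insert_self _ _⟩
      · intro x hx
        rcases mem_insert.mp hx with h | h
        · simp [h]
        · have := hsub h; simp only [mem_range] at this ⊢; omega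
      · intro i hi hi1
        rcases mem_insert.mp hi with h | h
        · subst h
          rcases mem_insert.mp hi1 with h2 | h2
          · omega
          · have := hsub h2; simp only [mem_range] at this; omega
        · rcases mem_insert.mp hi1 with h2 | h2
          · have := hsub h; simp only [mem_range] at this; omega
          · exact hind i h h2
    case left_neg =>
      rintro s hs
      rw [mem_filter] at hs
      exact insert_erase hs.2
    case right_neg =>
      rintro t ht
      rw [mem_Aset] at ht
      have hnot : m + 1 ∉ t := fun h => by have := ht.1 h; simp at this
      exact erase_insert hnot
    case h =>
      rintro s hs
      rw [mem_filter] at hs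
      have : s.card = (s.erase (m + 1)).card + 1 := by
        rw [card_erase_of_mem hs.2]
        have : 0 < s.card := card_pos.mpr ⟨m + 1, hs.2⟩
        omega
      rw [this]
  have ht : ∑ t ∈ Aset m, ((-1 : ℤ)) ^ (t.card + 1) = - g m := by
    simp [g, pow_succ, ← Finset.sum_neg_distrib]
  have : g (m + 2) = ∑ s ∈ Aset (m + 2), ((-1 : ℤ)) ^ s.card := rfl
  rw [this, ← hsplit, hA, hB, ht]
  show -g m + g (m + 1) = g (m + 1) - g m
  ring

lemma g_three (m : ℕ) : g (m + 3) = - g m := by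
  have h1 := g_rec (m + 1)
  have h2 := g_rec m
  have : m + 1 + 2 = m + 3 := by ring
  rw [this] at h1
  linarith

lemma g_one : g 1 = 0 := by decide
lemma g_two : g 2 = -1 := by decide
lemma g_threeval : g 3 = -1 := by decide

lemma g_vals (n : ℕ) (hn : 1 ≤ n) :
    g (3 * n - 2) = 0 ∧ g (3 * n - 1) = (-1) ^ n ∧ g (3 * n) = (-1) ^ n := by
  induction n with
  | zero => omega
  | succ k ih =>
    rcases Nat.eq_zero_or_pos k with hk | hk
    · subst hk
      norm_num [g_one, g_two, g_threeval]
    · obtain ⟨a, b, c⟩ := ih hk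
      have e1 : 3 * (k + 1) - 2 = (3 * k - 2) + 3 := by omega
      have e2 : 3 * (k + 1) - 1 = (3 * k - 1) + 3 := by omega
      have e3 : 3 * (k + 1) = 3 * k + 3 := by omega
      rw [e1, e2, e3, g_three, g_three, g_three, a, b, c]
      simp [pow_succ]

lemma indep_iff_image {m : ℕ} (s : Finset (Fin m)) :
    IsIndep (SimpleGraph.pathGraph m) s ↔ s.image Fin.val ∈ Aset m := by
  rw [mem_Aset]
  constructor
  · intro h
    refine ⟨?_, ?_⟩
    · intro x hx
      simp only [mem_image] at hx
      obtain ⟨u, _, rfl⟩ := hx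
      simp [mem_range, u.isLt]
    · intro i hi hi1
      simp only [mem_image] at hi hi1
      obtain ⟨u, hu, rfl⟩ := hi
      obtain ⟨v, hv, hv1⟩ := hi1
      exact h u hu v hv (SimpleGraph.pathGraph_adj.mpr (Or.inl hv1.symm))
  · rintro ⟨_, hind⟩ u hu v hv hadj
    rcases SimpleGraph.pathGraph_adj.mp hadj with h | h
    · exact hind u.val (mem_image_of_mem _ hu) (h ▸ mem_image_of_mem _ hv)
    · exact hind v.val (mem_image_of_mem _ hv) (h ▸ mem_image_of_mem _ hu)

lemma sum_neg_one_pow {α : Type*} (T : Finset (Finset α)) :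
    ∑ s ∈ T, ((-1 : ℤ)) ^ s.card =
      ((T.filter (fun s => Even s.card)).card : ℤ) -
        ((T.filter (fun s => Odd s.card)).card : ℤ) := by
  classical
  rw [← Finset.sum_filter_add_sum_filter_not T (fun s => Even s.card)]
  have h1 : ∑ s ∈ T.filter (fun s => Even s.card), ((-1 : ℤ)) ^ s.card
      = ((T.filter (fun s => Even s.card)).card : ℤ) := by
    rw [Finset.sum_congr rfl (fun s hs => (Finset.mem_filter.mp hs).2.neg_one_pow)]
    simp
  have h2 : ∑ s ∈ T.filter (fun s => ¬ Even s.card), ((-1 : ℤ)) ^ s.card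
      = - ((T.filter (fun s => Odd s.card)).card : ℤ) := by
    have : T.filter (fun s => ¬ Even s.card) = T.filter (fun s => Odd s.card) := by
      simp [Nat.not_even_iff_odd]
    rw [this, Finset.sum_congr rfl
      (fun s hs => (Finset.mem_filter.mp hs).2.neg_one_pow)]
    simp [mul_comm]
  rw [h1, h2]
  ring

lemma evenOddDiff_eq_g (m : ℕ) : evenOddDiff (SimpleGraph.pathGraph m) = g m := by
  classical
  unfold evenOddDiff
  have hcard : ∀ p : Finset (Fin m) → Prop, ∀ _ : DecidablePred p,
      Nat.card {s : Finset (Fin m) // p s} = (Finset.univ.filter p).card := by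
    intro p hp
    rw [Nat.card_eq_fintype_card, Fintype.card_subtype]
  rw [hcard _ (Classical.decPred _), hcard _ (Classical.decPred _)]
  have key : ∑ s ∈ Finset.univ.filter
        (fun s : Finset (Fin m) => IsIndep (SimpleGraph.pathGraph m) s),
        ((-1 : ℤ)) ^ s.card = g m := by
    unfold g
    apply Finset.sum_bij (fun s _ => s.image Fin.val)
    · intro s hs
      rw [mem_filter] at hs
      exact (indep_iff_image s).mp hs.2
    · intro a ha b hb hab
      exact Finset.image_injective Fin.val_injective hab
    · intro t ht
      rw [mem_Aset] at ht
      have hlt : ∀ x ∈ t, x < m := fun x hx => mem_range.mp (ht.1 hx)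
      refine ⟨t.attachFin hlt, ?_, ?_⟩
      · rw [mem_filter]
        refine ⟨mem_univ _, ?_⟩
        rw [indep_iff_image]
        have himg : (t.attachFin hlt).image Fin.val = t := by
          ext x
          simp only [mem_image]
          constructor
          · rintro ⟨u, hu, rfl⟩
            exact (Finset.mem_attachFin hlt).mp hu
          · intro hx
            exact ⟨⟨x, hlt x hx⟩, (Finset.mem_attachFin hlt).mpr hx, rfl⟩
        rw [himg]; exact mem_Aset.mpr ht
      · ext x
        simp only [mem_image]
        constructor
        · rintro ⟨u, hu, rfl⟩
          exact (Finset.mem_attachFin hlt).mp hu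
        · intro hx
          exact ⟨⟨x, hlt x hx⟩, (Finset.mem_attachFin hlt).mpr hx, rfl⟩
    · intro s hs
      rw [Finset.card_image_of_injective _ Fin.val_injective]
  rw [← key, sum_neg_one_pow]
  congr 2 <;> rw [Finset.filter_filter] <;> exact congrArg Finset.card (Finset.filter_congr_decidable ..)

theorem path_evenOddDiff (n : ℕ) (hn : 1 ≤ n) :
    evenOddDiff (SimpleGraph.pathGraph (3 * n - 2)) = 0 ∧
    evenOddDiff (SimpleGraph.pathGraph (3 * n - 1)) = (-1) ^ n ∧
    evenOddDiff (SimpleGraph.pathGraph (3 * n)) = (-1) ^ n := by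
  obtain ⟨a, b, c⟩ := g_vals n hn
  rw [evenOddDiff_eq_g, evenOddDiff_eq_g, evenOddDiff_eq_g]
  exact ⟨a, b, c⟩
end

section
/- For every integer n ≥ 1, let e(G) and o(G) denote the numbers of independent sets of even and odd cardinality of a graph G, respectively (the empty set counts as even). Then for cycles: e(C_{3n}) − o(C_{3n}) = 2(−1)^n, e(C_{3n+1}) − o(C_{3n+1}) = (−1)^n, and e(C_{3n+2}) − o(C_{3n+2}) = (−1)^{n+1}. -/
open Finset Matrix

instance {V : Type*} [DecidableEq V] (G : SimpleGraph V) [DecidableRel G.Adj] (s : Finset V) :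
    Decidable (IsIndep G s) := by
  unfold IsIndep; infer_instance

/-- transfer weight -/
def cw : Bool → Bool → ℤ := fun a b => if a && b then 0 else if b then -1 else 1

/-- transfer matrix -/
def cT : Matrix Bool Bool ℤ := Matrix.of cw

lemma cT_sq : cT ^ 2 = cT - 1 := by
  rw [pow_two]; decide

lemma cT_cube : cT ^ 3 = -1 := by
  rw [pow_succ, cT_sq, sub_mul, one_mul, ← pow_two, cT_sq]
  abel

lemma cT_six : cT ^ 6 = 1 := by
  rw [show (6 : ℕ) = 3 * 2 from rfl, pow_mul, cT_cube, neg_one_sq]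

/-- the snoc equivalence -/
def snocE (m : ℕ) : ((Fin m → Bool) × Bool) ≃ (Fin (m + 1) → Bool) where
  toFun p := Fin.snoc p.1 p.2
  invFun f := (fun i => f i.castSucc, f (Fin.last m))
  left_inv := by rintro ⟨g, c⟩; simp
  right_inv := fun f => Fin.snoc_init_self f

lemma snocE_apply (m : ℕ) (p : (Fin m → Bool) × Bool) : snocE m p = Fin.snoc p.1 p.2 := rfl

lemma snocE_zero {m : ℕ} (g : Fin (m + 1) → Bool) (c : Bool) :
    (Fin.snoc g c : Fin (m + 2) → Bool) 0 = g 0 := by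
  rw [show (0 : Fin (m + 2)) = Fin.castSucc 0 from rfl, Fin.snoc_castSucc]

/-- chain weight product -/
def chainW (m : ℕ) (f : Fin (m + 1) → Bool) : ℤ :=
  ∏ i : Fin m, cw (f i.castSucc) (f i.succ)

lemma chainW_snoc (m : ℕ) (g : Fin (m + 1) → Bool) (c : Bool) :
    chainW (m + 1) (Fin.snoc g c) = chainW m g * cw (g (Fin.last m)) c := by
  unfold chainW
  rw [Fin.prod_univ_castSucc]
  congr 1
  · apply Finset.prod_congr rfl
    intro i _
    rw [Fin.succ_castSucc, Fin.snoc_castSucc, Fin.snoc_castSucc]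
  · rw [Fin.succ_last, Fin.snoc_last, Fin.snoc_castSucc]

lemma cT_pow_apply (m : ℕ) (a b : Bool) :
    (cT ^ m) a b = ∑ f : Fin (m + 1) → Bool,
      if f 0 = a ∧ f (Fin.last m) = b then chainW m f else 0 := by
  induction m generalizing b with
  | zero =>
    cases a <;> cases b <;> decide
  | succ m ih =>
    rw [pow_succ, Matrix.mul_apply]
    have lhs : ∀ c : Bool, (cT ^ m) a c * cT c b
        = ∑ g : Fin (m + 1) → Bool,
            if g 0 = a ∧ g (Fin.last m) = c then chainW m g * cw (g (Fin.last m)) b else 0 := by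
      intro c
      rw [ih c, Finset.sum_mul]
      apply Finset.sum_congr rfl
      intro g _
      by_cases hg : g 0 = a ∧ g (Fin.last m) = c
      · rw [if_pos hg, if_pos hg, hg.2]; rfl
      · rw [if_neg hg, if_neg hg, zero_mul]
    simp only [lhs]
    rw [Finset.sum_comm]
    rw [← (snocE (m + 1)).sum_comp, Fintype.sum_prod_type]
    apply Finset.sum_congr rfl
    intro g _
    simp only [snocE_apply, snocE_zero, Fin.snoc_last, chainW_snoc]
    by_cases hg : g 0 = a
    · simp only [hg, true_and]
      rw [Fintype.sum_bool, Fintype.sum_bool]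
      cases hb : g (Fin.last m) <;> cases b <;> simp
    · simp [hg]

/-- cyclic weight product -/
def cycW (M : ℕ) (f : Fin (M + 1) → Bool) : ℤ := ∏ i : Fin (M + 1), cw (f i) (f (i + 1))

lemma trace_eq (m : ℕ) :
    Matrix.trace (cT ^ (m + 1)) = ∑ f : Fin (m + 1) → Bool, cycW m f := by
  rw [Matrix.trace]
  simp only [Matrix.diag, cT_pow_apply]
  rw [Finset.sum_comm]
  have collapse : ∀ f : Fin (m + 2) → Bool,
      (∑ a : Bool, if f 0 = a ∧ f (Fin.last (m + 1)) = a then chainW (m + 1) f else 0)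
        = if f (Fin.last (m + 1)) = f 0 then chainW (m + 1) f else 0 := by
    intro f
    rw [Fintype.sum_bool]
    cases h0 : f 0 <;> cases hl : f (Fin.last (m + 1)) <;> simp
  simp only [collapse]
  rw [← (snocE (m + 1)).sum_comp, Fintype.sum_prod_type]
  apply Finset.sum_congr rfl
  intro g _
  simp only [snocE_apply, snocE_zero, Fin.snoc_last, chainW_snoc]
  rw [Fintype.sum_bool]
  have hcyc : cycW m g = chainW m g * cw (g (Fin.last m)) (g 0) := by
    unfold cycW chainW
    rw [Fin.prod_univ_castSucc]
    congr 1
    · apply Finset.prod_congr rfl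
      intro i _
      rw [Fin.coeSucc_eq_succ]
    · rw [Fin.last_add_one]
  rw [hcyc]
  cases h0 : g 0 <;> simp

/-- sum formulation of evenOddDiff -/
lemma evenOddDiff_eq_sum {V : Type*} [Fintype V] [DecidableEq V] (G : SimpleGraph V)
    [DecidableRel G.Adj] :
    evenOddDiff G = ∑ s : Finset V, if IsIndep G s then (-1 : ℤ) ^ s.card else 0 := by
  unfold evenOddDiff
  rw [Nat.card_eq_fintype_card, Nat.card_eq_fintype_card,
    Fintype.card_subtype, Fintype.card_subtype]
  set A := univ.filter (fun s : Finset V => IsIndep G s) with hA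
  have h1 : (univ.filter fun s : Finset V => IsIndep G s ∧ Even s.card)
      = A.filter (fun s => Even s.card) := by rw [hA, Finset.filter_filter]
  have h2 : (univ.filter fun s : Finset V => IsIndep G s ∧ Odd s.card)
      = A.filter (fun s => Odd s.card) := by rw [hA, Finset.filter_filter]
  rw [h1, h2, ← Finset.sum_filter, ← hA,
    ← Finset.sum_filter_add_sum_filter_not A (fun s => Even s.card)
      (fun s => (-1 : ℤ) ^ s.card)]
  have e1 : ∑ s ∈ A.filter (fun s => Even s.card), (-1 : ℤ) ^ s.card
      = ((A.filter (fun s => Even s.card)).card : ℤ) := by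
    refine Eq.trans (Finset.sum_congr rfl fun s hs =>
      Even.neg_one_pow (Finset.mem_filter.1 hs).2) ?_
    simp
  have e2 : ∑ s ∈ A.filter (fun s => ¬ Even s.card), (-1 : ℤ) ^ s.card
      = -((A.filter (fun s => Odd s.card)).card : ℤ) := by
    have hf : A.filter (fun s => ¬ Even s.card) = A.filter (fun s => Odd s.card) := by
      apply Finset.filter_congr
      intro s _
      rw [Nat.not_even_iff_odd]
    rw [hf]
    refine Eq.trans (Finset.sum_congr rfl fun s hs =>
      Odd.neg_one_pow (Finset.mem_filter.1 hs).2) ?_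
    simp
  rw [e1, e2]
  ring

/-- finset / bool-function equivalence -/
def fsE (M : ℕ) : (Fin M → Bool) ≃ Finset (Fin M) where
  toFun f := univ.filter (fun i => f i = true)
  invFun s := fun i => decide (i ∈ s)
  left_inv f := by funext i; simp
  right_inv s := by ext i; simp

lemma bridge (j : ℕ) :
    evenOddDiff (SimpleGraph.cycleGraph (j + 3)) = Matrix.trace (cT ^ (j + 3)) := by
  rw [show j + 3 = (j + 2) + 1 from rfl, trace_eq]
  rw [evenOddDiff_eq_sum, ← (fsE (j + 3)).sum_comp]
  apply Finset.sum_congr rfl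
  intro f _
  by_cases h : ∀ i : Fin (j + 3), ¬(f i = true ∧ f (i + 1) = true)
  · have hind : IsIndep (SimpleGraph.cycleGraph (j + 3)) (fsE (j + 3) f) := by
      intro u hu v hv hadj
      simp only [fsE, Equiv.coe_fn_mk, Finset.mem_filter, Finset.mem_univ, true_and] at hu hv
      rw [SimpleGraph.cycleGraph_adj] at hadj
      rcases hadj with h1 | h1
      · have huv : u = v + 1 := by rw [← h1]; abel
        exact h v ⟨hv, huv ▸ hu⟩
      · have hvu : v = u + 1 := by rw [← h1]; abel
        exact h u ⟨hu, hvu ▸ hv⟩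
    rw [if_pos hind]
    unfold cycW
    have hprod : ∀ i : Fin (j + 3), cw (f i) (f (i + 1)) = if f (i + 1) then -1 else 1 := by
      intro i
      have hi := h i
      unfold cw
      cases h1 : f i <;> cases h2 : f (i + 1) <;> simp_all
    rw [Finset.prod_congr rfl (fun i _ => hprod i)]
    rw [Fintype.prod_equiv (Equiv.addRight (1 : Fin (j + 3)))
      (fun i => if f (i + 1) then (-1 : ℤ) else 1)
      (fun i => if f i then (-1 : ℤ) else 1)
      (fun i => rfl)]
    rw [Finset.prod_ite, Finset.prod_const, Finset.prod_const, one_pow, mul_one]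
    congr 1
  · push_neg at h
    obtain ⟨i, h1, h2⟩ := h
    have hnind : ¬ IsIndep (SimpleGraph.cycleGraph (j + 3)) (fsE (j + 3) f) := by
      intro hind
      apply hind i (by simp [fsE, h1]) (i + 1) (by simp [fsE, h2])
      rw [SimpleGraph.cycleGraph_adj]
      right
      exact add_sub_cancel_left i 1
    rw [if_neg hnind]
    symm
    apply Finset.prod_eq_zero (Finset.mem_univ i)
    simp [cw, h1, h2]

lemma trace_periodic (j q : ℕ) :
    Matrix.trace (cT ^ (j + 6 * q)) = Matrix.trace (cT ^ j) := by
  rw [pow_add, pow_mul, cT_six, one_pow, mul_one]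

lemma trace_cT : Matrix.trace cT = 1 := by decide
lemma trace_one' : Matrix.trace (1 : Matrix Bool Bool ℤ) = 2 := by decide

lemma trace3 : Matrix.trace (cT ^ 3) = -2 := by
  rw [cT_cube, ← neg_one_smul ℤ (1 : Matrix Bool Bool ℤ), Matrix.trace_smul, trace_one']; norm_num
lemma trace4 : Matrix.trace (cT ^ 4) = -1 := by
  rw [show (4 : ℕ) = 3 + 1 from rfl, pow_add, cT_cube, pow_one, neg_one_mul,
    Matrix.trace_neg, trace_cT]
lemma trace5 : Matrix.trace (cT ^ 5) = 1 := by
  rw [show (5 : ℕ) = 3 + 2 from rfl, pow_add, cT_cube, cT_sq, neg_one_mul,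
    Matrix.trace_neg, Matrix.trace_sub, trace_cT, trace_one']
  norm_num
lemma trace6 : Matrix.trace (cT ^ 6) = 2 := by rw [cT_six, trace_one']
lemma trace7 : Matrix.trace (cT ^ 7) = 1 := by
  rw [show (7 : ℕ) = 1 + 6 * 1 from rfl, trace_periodic, pow_one, trace_cT]
lemma trace8 : Matrix.trace (cT ^ 8) = -1 := by
  rw [show (8 : ℕ) = 2 + 6 * 1 from rfl, trace_periodic, cT_sq,
    Matrix.trace_sub, trace_cT, trace_one']
  norm_num

theorem cycle_evenOddDiff (n : ℕ) (hn : 1 ≤ n) :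
    evenOddDiff (SimpleGraph.cycleGraph (3 * n)) = 2 * (-1) ^ n ∧
    evenOddDiff (SimpleGraph.cycleGraph (3 * n + 1)) = (-1) ^ n ∧
    evenOddDiff (SimpleGraph.cycleGraph (3 * n + 2)) = (-1) ^ (n + 1) := by
  obtain ⟨k, rfl⟩ : ∃ k, n = k + 1 := ⟨n - 1, by omega⟩
  rw [show 3 * (k + 1) = 3 * k + 3 from by ring]
  rw [show 3 * k + 3 + 1 = (3 * k + 1) + 3 from by omega,
    show 3 * k + 3 + 2 = (3 * k + 2) + 3 from by omega]
  rw [bridge, bridge, bridge]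
  rcases Nat.even_or_odd k with ⟨q, hq⟩ | ⟨q, hq⟩
  · -- k = q + q, so k + 1 odd
    have hodd : Odd (k + 1) := ⟨q, by omega⟩
    have heven : Even (k + 1 + 1) := ⟨q + 1, by omega⟩
    rw [hodd.neg_one_pow, heven.neg_one_pow]
    have a0 : 3 * k + 3 = 3 + 6 * q := by omega
    have a1 : 3 * k + 1 + 3 = 4 + 6 * q := by omega
    have a2 : 3 * k + 2 + 3 = 5 + 6 * q := by omega
    rw [a0, a1, a2, trace_periodic, trace_periodic, trace_periodic,
      trace3, trace4, trace5]
    norm_num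
  · -- k = 2q + 1, so k + 1 even
    have heven : Even (k + 1) := ⟨q + 1, by omega⟩
    have hodd : Odd (k + 1 + 1) := ⟨q + 1, by omega⟩
    rw [heven.neg_one_pow, hodd.neg_one_pow]
    have a0 : 3 * k + 3 = 6 + 6 * q := by omega
    have a1 : 3 * k + 1 + 3 = 7 + 6 * q := by omega
    have a2 : 3 * k + 2 + 3 = 8 + 6 * q := by omega
    rw [a0, a1, a2, trace_periodic, trace_periodic, trace_periodic,
      trace6, trace7, trace8]
    norm_num
end

section
/- Let e(G) and o(G) denote the numbers of independent sets of even and odd cardinality of a graph G, respectively (the empty set counts as even). Then for wheels: e(W_{3n+1}) − o(W_{3n+1}) = 2(−1)^n − 1 for every integer n ≥ 1, e(W_{3n}) − o(W_{3n}) = (−1)^n − 1 for every integer n ≥ 2, and e(W_{3n+2}) − o(W_{3n+2}) = (−1)^n − 1 for every integer n ≥ 1. -/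
/-- The wheel graph with one hub vertex (`none`) joined to every vertex of a cycle on `m`
vertices; it has `m + 1` vertices in total. -/
def wheelGraph (m : ℕ) : SimpleGraph (Option (Fin m)) where
  Adj a b := a ≠ b ∧ (a = none ∨ b = none ∨
    ∃ i j, a = some i ∧ b = some j ∧ (SimpleGraph.cycleGraph m).Adj i j)
  symm := by
    constructor
    rintro a b ⟨hne, h⟩
    refine ⟨hne.symm, ?_⟩
    rcases h with h | h | ⟨i, j, hi, hj, hadj⟩
    · exact Or.inr (Or.inl h)
    · exact Or.inl h
    · exact Or.inr (Or.inr ⟨j, i, hj, hi, hadj.symm⟩)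
  loopless := by
    constructor
    rintro a ⟨hne, _⟩
    exact hne rfl



open Finset

attribute [local instance] Classical.propDecidable

/-- No two consecutive naturals both in `s`. -/
def NPI (s : Finset ℕ) : Prop := ∀ i, ¬(i ∈ s ∧ i + 1 ∈ s)

noncomputable def PS (A : Finset ℕ) : ℤ :=
  ∑ t ∈ A.powerset, if NPI t then (-1 : ℤ) ^ t.card else 0

noncomputable def pval (n : ℕ) : ℤ := PS (range n)

lemma sum_powerset_map {α β M : Type*} [AddCommMonoid M] (f : α ↪ β) (A : Finset α)
    (g : Finset β → M) :
    ∑ s ∈ (A.map f).powerset, g s = ∑ t ∈ A.powerset, g (t.map f) := by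
  rw [show (A.map f).powerset = A.powerset.map ⟨fun t => t.map f, fun s t h => by
      rwa [Finset.map_inj] at h⟩ from ?_, Finset.sum_map]
  · rfl
  · ext s
    simp only [mem_powerset, mem_map, Function.Embedding.coeFn_mk]
    constructor
    · intro hs
      refine ⟨A.filter (fun a => f a ∈ s), filter_subset _ _, ?_⟩
      ext b
      change b ∈ map f (A.filter (fun a => f a ∈ s)) ↔ b ∈ s
      simp only [mem_map, mem_filter]
      constructor
      · rintro ⟨a, ⟨_, ha⟩, rfl⟩; exact ha
      · intro hb
        obtain ⟨a, haA, rfl⟩ := mem_map.mp (hs hb)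
        exact ⟨a, ⟨haA, hb⟩, rfl⟩
    · rintro ⟨t, ht, rfl⟩
      exact map_subset_map.mpr ht

lemma pval_zero : pval 0 = 1 := by
  simp [pval, PS, NPI]

lemma pval_one : pval 1 = 0 := by
  have h0 : NPI {0} := by intro i; simp
  have he : NPI (∅ : Finset ℕ) := by intro i; simp
  rw [pval, PS, show range 1 = insert 0 ∅ by rfl,
    Finset.sum_powerset_insert (by simp)]
  simp [he, h0]

lemma pval_rec (n : ℕ) : pval (n + 2) = pval (n + 1) - pval n := by
  have hrange : range (n + 2) = insert (n + 1) (range (n + 1)) := by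
    rw [range_add_one]
  have hnm : n + 1 ∉ range (n + 1) := by simp
  rw [pval, PS, hrange, Finset.sum_powerset_insert hnm]
  have h2 : ∑ t ∈ (range (n + 1)).powerset,
      (if NPI (insert (n + 1) t) then (-1 : ℤ) ^ (insert (n + 1) t).card else 0) = - pval n := by
    have step : ∀ t ∈ (range (n + 1)).powerset,
        (if NPI (insert (n + 1) t) then (-1 : ℤ) ^ (insert (n + 1) t).card else 0) =
        (if NPI t ∧ n ∉ t then -(-1 : ℤ) ^ t.card else 0) := by
      intro t ht
      rw [mem_powerset] at ht
      have hnotmem : n + 1 ∉ t := fun h => by simpa using ht h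
      have hiff : NPI (insert (n + 1) t) ↔ NPI t ∧ n ∉ t := by
        constructor
        · intro h
          refine ⟨fun i hi => h i ⟨mem_insert_of_mem hi.1, mem_insert_of_mem hi.2⟩, fun hn => ?_⟩
          exact h n ⟨mem_insert_of_mem hn, mem_insert_self _ _⟩
        · rintro ⟨h, hn⟩ i ⟨hi1, hi2⟩
          rcases mem_insert.mp hi1 with h1 | h1
          · rcases mem_insert.mp hi2 with h2 | h2
            · omega
            · have : i + 1 < n + 1 := by simpa using ht h2
              omega
          · rcases mem_insert.mp hi2 with h2 | h2
            · have : i = n := by omega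
              exact hn (this ▸ h1)
            · exact h i ⟨h1, h2⟩
      rw [card_insert_of_notMem hnotmem]
      by_cases hc : NPI t ∧ n ∉ t
      · rw [if_pos (hiff.mpr hc), if_pos hc, pow_succ]
        ring
      · rw [if_neg (fun h => hc (hiff.mp h)), if_neg hc]
    rw [Finset.sum_congr rfl step]
    have hsub : (range n).powerset ⊆ (range (n + 1)).powerset :=
      powerset_mono.mpr (range_subset_range.mpr (by omega))
    rw [← Finset.sum_subset hsub, pval, PS, ← Finset.sum_neg_distrib]
    · apply Finset.sum_congr rfl
      intro t ht
      rw [mem_powerset] at ht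
      have : n ∉ t := fun h => by simpa using ht h
      by_cases hc : NPI t
      · rw [if_pos ⟨hc, this⟩, if_pos hc]
      · rw [if_neg (fun h => hc h.1), if_neg hc, neg_zero]
    · intro t ht hnt
      rw [mem_powerset] at ht
      rw [mem_powerset] at hnt
      have hn : n ∈ t := by
        by_contra hn
        refine hnt (fun x hx => ?_)
        have h1 := ht hx
        rw [mem_range] at h1 ⊢
        have hxn : x ≠ n := fun h => hn (h ▸ hx)
        omega
      rw [if_neg (fun h => h.2 hn)]
  rw [h2]
  simp only [pval, PS]
  ring

lemma pval_add_three (n : ℕ) : pval (n + 3) = - pval n := by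
  have h1 := pval_rec (n + 1)
  have h2 := pval_rec n
  have : n + 1 + 2 = n + 3 := by ring
  rw [this] at h1
  linarith

lemma pval_values (k : ℕ) :
    pval (3 * k) = (-1) ^ k ∧ pval (3 * k + 1) = 0 ∧ pval (3 * k + 2) = -(-1) ^ k := by
  induction k with
  | zero =>
    refine ⟨by simpa using pval_zero, by simpa using pval_one, ?_⟩
    have := pval_rec 0
    simp only [pow_zero]
    rw [show (3:ℕ) * 0 + 2 = 0 + 2 by ring, this]
    rw [show (0:ℕ) + 1 = 1 from rfl]
    rw [pval_one, pval_zero]; ring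
  | succ k ih =>
    obtain ⟨i1, i2, i3⟩ := ih
    refine ⟨?_, ?_, ?_⟩
    · rw [show 3 * (k+1) = 3*k + 3 by ring, pval_add_three, i1]; ring
    · rw [show 3 * (k+1) + 1 = (3*k+1) + 3 by ring, pval_add_three, i2]; ring
    · rw [show 3 * (k+1) + 2 = (3*k+2) + 3 by ring, pval_add_three, i3]; ring

def succEmb : ℕ ↪ ℕ := ⟨Nat.succ, Nat.succ_injective⟩

lemma mem_map_succEmb {t : Finset ℕ} {x : ℕ} : x ∈ t.map succEmb ↔ ∃ a ∈ t, a + 1 = x := by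
  simp [succEmb, Nat.succ_eq_add_one]

lemma NPI_map_succ (t : Finset ℕ) : NPI (t.map succEmb) ↔ NPI t := by
  constructor
  · intro h a ⟨ha1, ha2⟩
    exact h (a + 1) ⟨mem_map_succEmb.mpr ⟨a, ha1, rfl⟩, mem_map_succEmb.mpr ⟨a + 1, ha2, rfl⟩⟩
  · intro h i ⟨hi1, hi2⟩
    obtain ⟨a, ha, rfl⟩ := mem_map_succEmb.mp hi1
    obtain ⟨b, hb, hab⟩ := mem_map_succEmb.mp hi2
    have : b = a + 1 := by omega
    exact h a ⟨ha, this ▸ hb⟩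

lemma PS_map_succ (k : ℕ) : PS ((range k).map succEmb) = pval k := by
  rw [PS, sum_powerset_map, pval, PS]
  apply Finset.sum_congr rfl
  intro t _
  rw [card_map]
  by_cases hc : NPI t
  · rw [if_pos ((NPI_map_succ t).mpr hc), if_pos hc]
  · rw [if_neg (fun h => hc ((NPI_map_succ t).mp h)), if_neg hc]

def cycIndep (m : ℕ) (s : Finset ℕ) : Prop := NPI s ∧ ¬(0 ∈ s ∧ m - 1 ∈ s)

noncomputable def CS (m : ℕ) : ℤ :=
  ∑ t ∈ (range m).powerset, if cycIndep m t then (-1 : ℤ) ^ t.card else 0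

lemma CS_eq (k : ℕ) : CS (k + 3) = pval (k + 2) - pval k := by
  have hrange : range (k + 3) = insert (k + 2) (range (k + 2)) := by rw [range_add_one]
  have hnm : k + 2 ∉ range (k + 2) := by simp
  rw [CS, hrange, Finset.sum_powerset_insert hnm]
  have hA : ∑ t ∈ (range (k + 2)).powerset,
      (if cycIndep (k + 3) t then (-1 : ℤ) ^ t.card else 0) = pval (k + 2) := by
    rw [pval, PS]
    apply Finset.sum_congr rfl
    intro t ht
    rw [mem_powerset] at ht
    have h2 : k + 2 ∉ t := fun h => by simpa using ht h
    have : cycIndep (k + 3) t ↔ NPI t := by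
      unfold cycIndep
      constructor
      · exact fun h => h.1
      · intro h
        refine ⟨h, fun hh => ?_⟩
        exact h2 (by simpa using hh.2)
    by_cases hc : NPI t
    · rw [if_pos (this.mpr hc), if_pos hc]
    · rw [if_neg (fun h => hc (this.mp h)), if_neg hc]
  have hB : ∑ t ∈ (range (k + 2)).powerset,
      (if cycIndep (k + 3) (insert (k + 2) t) then (-1 : ℤ) ^ (insert (k + 2) t).card else 0)
      = - pval k := by
    have step : ∀ t ∈ (range (k + 2)).powerset,
        (if cycIndep (k + 3) (insert (k + 2) t) then (-1 : ℤ) ^ (insert (k + 2) t).card else 0) =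
        (if NPI t ∧ 0 ∉ t ∧ k + 1 ∉ t then -(-1 : ℤ) ^ t.card else 0) := by
      intro t ht
      rw [mem_powerset] at ht
      have hnotmem : k + 2 ∉ t := fun h => by simpa using ht h
      have hiff : cycIndep (k + 3) (insert (k + 2) t) ↔ NPI t ∧ 0 ∉ t ∧ k + 1 ∉ t := by
        unfold cycIndep
        constructor
        · rintro ⟨hnpi, hw⟩
          refine ⟨fun i hi => hnpi i ⟨mem_insert_of_mem hi.1, mem_insert_of_mem hi.2⟩,
            fun h0 => ?_, fun h1 => ?_⟩
          · exact hw ⟨mem_insert_of_mem h0, by simp⟩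
          · exact hnpi (k + 1) ⟨mem_insert_of_mem h1, by simp⟩
        · rintro ⟨hnpi, h0, h1⟩
          constructor
          · rintro i ⟨hi1, hi2⟩
            rcases mem_insert.mp hi1 with e1 | e1
            · rcases mem_insert.mp hi2 with e2 | e2
              · omega
              · have : i + 1 < k + 2 := by simpa using ht e2
                omega
            · rcases mem_insert.mp hi2 with e2 | e2
              · have : i = k + 1 := by omega
                exact h1 (this ▸ e1)
              · exact hnpi i ⟨e1, e2⟩
          · rintro ⟨hz, _⟩
            rcases mem_insert.mp hz with e | e
            · omega
            · exact h0 e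
      rw [card_insert_of_notMem hnotmem]
      by_cases hc : NPI t ∧ 0 ∉ t ∧ k + 1 ∉ t
      · rw [if_pos (hiff.mpr hc), if_pos hc, pow_succ]; ring
      · rw [if_neg (fun h => hc (hiff.mp h)), if_neg hc]
    rw [Finset.sum_congr rfl step]
    have hmem : ∀ x, x ∈ (range k).map succEmb ↔ (x < k + 2 ∧ x ≠ 0 ∧ x ≠ k + 1) := by
      intro x
      rw [mem_map_succEmb]
      constructor
      · rintro ⟨a, ha, rfl⟩
        have : a < k := by simpa using ha
        omega
      · rintro ⟨hx1, hx2, hx3⟩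
        exact ⟨x - 1, by rw [mem_range]; omega, by omega⟩
    have hsub : ((range k).map succEmb).powerset ⊆ (range (k + 2)).powerset := by
      apply powerset_mono.mpr
      intro x hx
      rw [mem_range]
      exact ((hmem x).mp hx).1
    rw [← Finset.sum_subset hsub, ← PS_map_succ k, PS, ← Finset.sum_neg_distrib]
    · apply Finset.sum_congr rfl
      intro t ht
      rw [mem_powerset] at ht
      have h0 : 0 ∉ t := fun h => ((hmem 0).mp (ht h)).2.1 rfl
      have h1 : k + 1 ∉ t := fun h => ((hmem (k + 1)).mp (ht h)).2.2 rfl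
      by_cases hc : NPI t
      · rw [if_pos ⟨hc, h0, h1⟩, if_pos hc]
      · rw [if_neg (fun h => hc h.1), if_neg hc, neg_zero]
    · intro t ht hnt
      rw [mem_powerset] at ht hnt
      have : ¬(0 ∉ t ∧ k + 1 ∉ t) := by
        intro hh
        refine hnt (fun x hx => ?_)
        rw [hmem x]
        have hx2 := ht hx
        rw [mem_range] at hx2
        exact ⟨hx2, fun e => hh.1 (e ▸ hx), fun e => hh.2 (e ▸ hx)⟩
      rw [if_neg (fun h => this ⟨h.2.1, h.2.2⟩)]
  rw [hA, hB]
  ring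

lemma eod_eq_sum {V : Type*} [Fintype V] (G : SimpleGraph V) :
    evenOddDiff G = ∑ s : Finset V, if IsIndep G s then (-1 : ℤ) ^ s.card else 0 := by
  have h1 : (Nat.card {s : Finset V // IsIndep G s ∧ Even s.card} : ℤ)
      = ∑ s : Finset V, if IsIndep G s ∧ Even s.card then (1 : ℤ) else 0 := by
    rw [Nat.card_eq_fintype_card, Fintype.card_subtype, Finset.sum_boole]
  have h2 : (Nat.card {s : Finset V // IsIndep G s ∧ Odd s.card} : ℤ)
      = ∑ s : Finset V, if IsIndep G s ∧ Odd s.card then (1 : ℤ) else 0 := by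
    rw [Nat.card_eq_fintype_card, Fintype.card_subtype, Finset.sum_boole]
  rw [evenOddDiff, h1, h2, ← Finset.sum_sub_distrib]
  apply Finset.sum_congr rfl
  intro s _
  by_cases hi : IsIndep G s
  · by_cases he : Even s.card
    · rw [if_pos hi, if_pos ⟨hi, he⟩, if_neg (fun h => (Nat.not_even_iff_odd.mpr h.2) he),
        Even.neg_one_pow he]
      ring
    · rw [if_pos hi, if_neg (fun h => he h.2), if_pos ⟨hi, Nat.not_even_iff_odd.mp he⟩,
        Odd.neg_one_pow (Nat.not_even_iff_odd.mp he)]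
      ring
  · rw [if_neg hi, if_neg (fun h => hi h.1), if_neg (fun h => hi h.1)]
    ring

lemma wheel_adj_some {m : ℕ} {i j : Fin m} :
    (wheelGraph m).Adj (some i) (some j) ↔ (SimpleGraph.cycleGraph m).Adj i j := by
  constructor
  · rintro ⟨hne, h | h | ⟨i', j', hi', hj', hadj⟩⟩
    · simp at h
    · simp at h
    · rw [Option.some_inj] at hi' hj'
      rwa [hi', hj']
  · intro h
    exact ⟨by simp [h.ne], Or.inr (Or.inr ⟨i, j, rfl, rfl, h⟩)⟩

lemma map_some_eraseNone {α : Type*} {s : Finset (Option α)} (h : none ∉ s) :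
    (s.eraseNone).map Function.Embedding.some = s := by
  ext o
  cases o with
  | none => simp [h]
  | some a => simp [Finset.mem_eraseNone]

lemma wheel_eod (m : ℕ) :
    evenOddDiff (wheelGraph m) =
      (∑ t : Finset (Fin m), if IsIndep (SimpleGraph.cycleGraph m) t
        then (-1 : ℤ) ^ t.card else 0) - 1 := by
  rw [eod_eq_sum]
  rw [← Finset.sum_filter_add_sum_filter_not Finset.univ (fun s => none ∈ s)]
  have hfst : ∑ s ∈ Finset.univ.filter (fun s : Finset (Option (Fin m)) => none ∈ s),
      (if IsIndep (wheelGraph m) s then (-1 : ℤ) ^ s.card else 0) = -1 := by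
    rw [Finset.sum_eq_single_of_mem ({none} : Finset (Option (Fin m)))
      (by simp) ?_]
    · have hind : IsIndep (wheelGraph m) {none} := by
        intro u hu v hv
        simp at hu hv
        subst hu; subst hv
        exact (wheelGraph m).loopless.irrefl none
      rw [if_pos hind]
      simp
    · intro b hb hne
      simp only [Finset.mem_filter] at hb
      have : ∃ i : Fin m, some i ∈ b := by
        by_contra hc
        push_neg at hc
        apply hne
        ext o
        cases o with
        | none => simp [hb.2]
        | some a => simp [hc a]
      obtain ⟨i, hi⟩ := this
      have : ¬ IsIndep (wheelGraph m) b := by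
        intro hind
        exact hind none hb.2 (some i) hi ⟨by simp, Or.inl rfl⟩
      rw [if_neg this]
  rw [hfst]
  have hsnd : ∑ s ∈ Finset.univ.filter (fun s : Finset (Option (Fin m)) => none ∉ s),
      (if IsIndep (wheelGraph m) s then (-1 : ℤ) ^ s.card else 0) =
      ∑ t : Finset (Fin m), if IsIndep (SimpleGraph.cycleGraph m) t
        then (-1 : ℤ) ^ t.card else 0 := by
    apply Finset.sum_nbij' (i := fun s => s.eraseNone)
      (j := fun t => t.map Function.Embedding.some)
    · intro s _; exact Finset.mem_univ _
    · intro t _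
      simp only [Finset.mem_filter]
      refine ⟨Finset.mem_univ _, ?_⟩
      simp
    · intro s hs
      simp only [Finset.mem_filter] at hs
      exact map_some_eraseNone hs.2
    · intro t _
      exact Finset.eraseNone_map_some t
    · intro s hs
      simp only [Finset.mem_filter] at hs
      have hcard : (s.eraseNone).card = s.card := by
        rw [← map_some_eraseNone hs.2, Finset.card_map, Finset.eraseNone_map_some]
      have hiff : IsIndep (wheelGraph m) s ↔ IsIndep (SimpleGraph.cycleGraph m) s.eraseNone := by
        constructor
        · intro h i hi j hj hadj
          rw [Finset.mem_eraseNone] at hi hj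
          exact h (some i) hi (some j) hj (wheel_adj_some.mpr hadj)
        · intro h u hu v hv hadj
          cases u with
          | none => exact hs.2 hu
          | some i =>
            cases v with
            | none => exact hs.2 hv
            | some j =>
              exact h i (Finset.mem_eraseNone.mpr hu) j (Finset.mem_eraseNone.mpr hv)
                (wheel_adj_some.mp hadj)
      rw [hcard]
      by_cases hc : IsIndep (wheelGraph m) s
      · rw [if_pos hc, if_pos (hiff.mp hc)]
      · rw [if_neg hc, if_neg (fun h => hc (hiff.mpr h))]
  rw [hsnd]
  ring

lemma fin_adj_iff {k : ℕ} (u v : Fin (k + 3)) :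
    (SimpleGraph.cycleGraph (k + 3)).Adj u v ↔
      (u.val + 1 = v.val ∨ v.val + 1 = u.val ∨
        (u.val = 0 ∧ v.val = k + 2) ∨ (v.val = 0 ∧ u.val = k + 2)) := by
  have key : ∀ a b : Fin (k + 3), b - a = 1 ↔
      (a.val + 1 = b.val ∨ (a.val = k + 2 ∧ b.val = 0)) := by
    intro a b
    rw [sub_eq_iff_eq_add, add_comm 1 a, ← Fin.val_eq_val, Fin.val_add_one]
    have ha := a.isLt
    have hb := b.isLt
    by_cases hlast : a = Fin.last (k + 2)
    · have : a.val = k + 2 := by rw [hlast]; rfl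
      rw [if_pos hlast]
      omega
    · have : a.val ≠ k + 2 := by
        intro h
        exact hlast (Fin.ext h)
      rw [if_neg hlast]
      omega
  rw [show (SimpleGraph.cycleGraph (k + 3)).Adj u v ↔ (u - v = 1 ∨ v - u = 1) from
    SimpleGraph.cycleGraph_adj (n := k + 1), key v u, key u v]
  tauto

lemma mem_map_val {m : ℕ} {t : Finset (Fin m)} {x : ℕ} :
    x ∈ t.map Fin.valEmbedding ↔ ∃ u ∈ t, u.val = x := by
  simp

lemma cyc_sum (k : ℕ) :
    (∑ t : Finset (Fin (k + 3)), if IsIndep (SimpleGraph.cycleGraph (k + 3)) t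
      then (-1 : ℤ) ^ t.card else 0) = CS (k + 3) := by
  have huniv : (Finset.range (k + 3)) = (Finset.univ : Finset (Fin (k + 3))).map
      Fin.valEmbedding := by
    rw [Fin.map_valEmbedding_univ]
    ext x
    simp
  rw [CS, huniv, sum_powerset_map, Finset.powerset_univ]
  apply Finset.sum_congr rfl
  intro t _
  have hiff : cycIndep (k + 3) (t.map Fin.valEmbedding) ↔
      IsIndep (SimpleGraph.cycleGraph (k + 3)) t := by
    constructor
    · rintro ⟨hnpi, hw⟩ u hu v hv hadj
      rcases (fin_adj_iff u v).mp hadj with h | h | h | h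
      · exact hnpi u.val ⟨mem_map_val.mpr ⟨u, hu, rfl⟩, mem_map_val.mpr ⟨v, hv, h.symm⟩⟩
      · exact hnpi v.val ⟨mem_map_val.mpr ⟨v, hv, rfl⟩, mem_map_val.mpr ⟨u, hu, h.symm⟩⟩
      · refine hw ⟨mem_map_val.mpr ⟨u, hu, h.1⟩, ?_⟩
        rw [show k + 3 - 1 = k + 2 by omega]
        exact mem_map_val.mpr ⟨v, hv, h.2⟩
      · refine hw ⟨mem_map_val.mpr ⟨v, hv, h.1⟩, ?_⟩
        rw [show k + 3 - 1 = k + 2 by omega]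
        exact mem_map_val.mpr ⟨u, hu, h.2⟩
    · intro h
      constructor
      · rintro i ⟨hi1, hi2⟩
        obtain ⟨u, hu, hu2⟩ := mem_map_val.mp hi1
        obtain ⟨v, hv, hv2⟩ := mem_map_val.mp hi2
        exact h u hu v hv ((fin_adj_iff u v).mpr (by omega))
      · rintro ⟨h0, hm⟩
        rw [show k + 3 - 1 = k + 2 by omega] at hm
        obtain ⟨u, hu, hu2⟩ := mem_map_val.mp h0
        obtain ⟨v, hv, hv2⟩ := mem_map_val.mp hm
        exact h u hu v hv ((fin_adj_iff u v).mpr (by omega))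
  rw [Finset.card_map]
  by_cases hc : IsIndep (SimpleGraph.cycleGraph (k + 3)) t
  · rw [if_pos (hiff.mpr hc), if_pos hc]
  · rw [if_neg (fun h => hc (hiff.mp h)), if_neg hc]

lemma wheel_val (k : ℕ) :
    evenOddDiff (wheelGraph (k + 3)) = pval (k + 2) - pval k - 1 := by
  rw [wheel_eod, cyc_sum, CS_eq]

theorem wheel_evenOddDiff :
    (∀ n : ℕ, 1 ≤ n → evenOddDiff (wheelGraph (3 * n)) = 2 * (-1) ^ n - 1) ∧
    (∀ n : ℕ, 2 ≤ n → evenOddDiff (wheelGraph (3 * n - 1)) = (-1) ^ n - 1) ∧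
    (∀ n : ℕ, 1 ≤ n → evenOddDiff (wheelGraph (3 * n + 1)) = (-1) ^ n - 1) := by
  refine ⟨?_, ?_, ?_⟩
  · intro n hn
    obtain ⟨j, rfl⟩ : ∃ j, n = j + 1 := ⟨n - 1, by omega⟩
    rw [show 3 * (j + 1) = 3 * j + 3 by ring, wheel_val (3 * j)]
    obtain ⟨h1, h2, h3⟩ := pval_values j
    rw [h1, h3, pow_succ]
    ring
  · intro n hn
    obtain ⟨j, rfl⟩ : ∃ j, n = j + 2 := ⟨n - 2, by omega⟩
    rw [show 3 * (j + 2) - 1 = (3 * j + 2) + 3 by omega, wheel_val (3 * j + 2)]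
    obtain ⟨_, _, h3⟩ := pval_values j
    obtain ⟨_, h2', _⟩ := pval_values (j + 1)
    rw [show 3 * j + 2 + 2 = 3 * (j + 1) + 1 by ring, h2', h3]
    rw [show (-1 : ℤ) ^ (j + 2) = (-1) ^ j by rw [pow_add]; ring]
    ring
  · intro n hn
    obtain ⟨j, rfl⟩ : ∃ j, n = j + 1 := ⟨n - 1, by omega⟩
    rw [show 3 * (j + 1) + 1 = (3 * j + 1) + 3 by ring, wheel_val (3 * j + 1)]
    obtain ⟨_, h2, _⟩ := pval_values j
    obtain ⟨h1', _, _⟩ := pval_values (j + 1)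
    rw [show 3 * j + 1 + 2 = 3 * (j + 1) by ring, h1', h2, pow_succ]
    ring
end

section
/- Let G = K_{n_1,n_2,…,n_m} be a complete m-partite graph with m ≥ 1 parts, each part nonempty. Then the graph I*_α(G), whose vertices are all nonempty independent sets of G with two such sets adjacent if and only if one is obtained from the other by adding a single vertex, has exactly m connected components. -/
/-- The graph whose vertices are all nonempty independent sets of `G`, two of them adjacent
iff one is obtained from the other by adding a single vertex. -/
def indepGraphStar {V : Type*} (G : SimpleGraph V) :
    SimpleGraph {s : Finset V // IsIndep G s ∧ s.Nonempty} where
  Adj A B := (A.1 ⊆ B.1 ∧ B.1.card = A.1.card + 1) ∨ (B.1 ⊆ A.1 ∧ A.1.card = B.1.card + 1)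
  symm := by
    constructor
    rintro A B (⟨h1, h2⟩ | ⟨h1, h2⟩)
    · exact Or.inr ⟨h1, h2⟩
    · exact Or.inl ⟨h1, h2⟩
  loopless := by
    constructor
    rintro A (⟨_, h⟩ | ⟨_, h⟩) <;> omega

lemma IsIndep.subset' {V : Type*} {G : SimpleGraph V} {s t : Finset V}
    (h : IsIndep G t) (hst : s ⊆ t) : IsIndep G s :=
  fun u hu v hv => h u (hst hu) v (hst hv)

lemma isIndep_singleton {V : Type*} (G : SimpleGraph V) (a : V) : IsIndep G {a} := by
  intro u hu v hv
  simp only [Finset.mem_singleton] at hu hv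
  rw [hu, hv]; exact G.loopless.irrefl a

lemma indep_same_fst {ι : Type*} {V : ι → Type*}
    {s : Finset ((i : ι) × V i)}
    (hs : IsIndep (SimpleGraph.completeMultipartiteGraph V) s)
    {u v : (i : ι) × V i} (hu : u ∈ s) (hv : v ∈ s) : u.1 = v.1 := by
  by_contra h
  exact hs u hu v hv h

/-- Every nonempty independent set is reachable from the singleton of any of its members. -/
lemma reach_singleton {V : Type*} {G : SimpleGraph V} :
    ∀ (k : ℕ) (A : {s : Finset V // IsIndep G s ∧ s.Nonempty}) (a : V),
      a ∈ A.1 → A.1.card = k →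
      (indepGraphStar G).Reachable A
        ⟨{a}, isIndep_singleton G a, Finset.singleton_nonempty a⟩ := by
  classical
  intro k
  induction k with
  | zero => intro A a ha hc; exact absurd (Finset.card_eq_zero.mp hc ▸ ha) (by simp)
  | succ k ih =>
    intro A a ha hc
    by_cases h : A.1 = {a}
    · have : A = ⟨{a}, isIndep_singleton G a, Finset.singleton_nonempty a⟩ :=
        Subtype.ext h
      rw [this]
    · obtain ⟨b, hb, hba⟩ := Finset.not_subset.mp (fun hsub => h (Finset.Subset.antisymm hsub
        (Finset.singleton_subset_iff.mpr ha)))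
      rw [Finset.mem_singleton] at hba
      have hane : a ∈ A.1.erase b := Finset.mem_erase.mpr ⟨fun e => hba e.symm, ha⟩
      set A' : {s : Finset V // IsIndep G s ∧ s.Nonempty} :=
        ⟨A.1.erase b, A.2.1.subset' (Finset.erase_subset _ _), ⟨a, hane⟩⟩ with hA'
      have hadj : (indepGraphStar G).Adj A A' := by
        refine Or.inr ⟨Finset.erase_subset _ _, ?_⟩
        have := Finset.card_erase_of_mem hb
        simp only [hA', this]
        omega
      have hcard : A'.1.card = k := by
        have := Finset.card_erase_of_mem hb
        simp only [hA', this]; omega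
      exact hadj.reachable.trans (ih A' a hane hcard)

theorem indepGraphStar_multipartite_components (m : ℕ) (hm : 1 ≤ m)
    (n : Fin m → ℕ) (hn : ∀ i, 1 ≤ n i) :
    Nat.card
      (indepGraphStar (SimpleGraph.completeMultipartiteGraph fun i : Fin m => Fin (n i))).ConnectedComponent
      = m := by
  set G := SimpleGraph.completeMultipartiteGraph fun i : Fin m => Fin (n i) with hG
  set S := {s : Finset ((i : Fin m) × Fin (n i)) // IsIndep G s ∧ s.Nonempty} with hS
  let φ : S → Fin m := fun A => A.2.2.choose.1
  have hφ : ∀ (A : S) (a), a ∈ A.1 → φ A = a.1 := fun A a ha =>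
    indep_same_fst A.2.1 A.2.2.choose_spec ha
  have hadj : ∀ A B : S, (indepGraphStar G).Adj A B → φ A = φ B := by
    rintro A B (⟨hsub, -⟩ | ⟨hsub, -⟩)
    · obtain ⟨a, ha⟩ := A.2.2
      rw [hφ A a ha, hφ B a (hsub ha)]
    · obtain ⟨b, hb⟩ := B.2.2
      rw [hφ A b (hsub hb), hφ B b hb]
  have hwalk : ∀ (v w : S) (p : (indepGraphStar G).Walk v w), φ v = φ w := by
    intro v w p
    induction p with
    | nil => rfl
    | cons h p ih => exact (hadj _ _ h).trans ih
  let F : (indepGraphStar G).ConnectedComponent → Fin m :=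
    SimpleGraph.ConnectedComponent.lift φ (fun v w p _ => hwalk v w p)
  -- singletons with the same index are reachable
  have hsing : ∀ u v : (i : Fin m) × Fin (n i), u.1 = v.1 →
      (indepGraphStar G).Reachable
        ⟨{u}, isIndep_singleton G u, Finset.singleton_nonempty u⟩
        ⟨{v}, isIndep_singleton G v, Finset.singleton_nonempty v⟩ := by
    intro u v huv
    by_cases h : u = v
    · subst h; rfl
    · have hindep : IsIndep G {u, v} := by
        intro x hx y hy
        simp only [Finset.mem_insert, Finset.mem_singleton] at hx hy
        have hxy : x.1 = y.1 := by
          rcases hx with rfl | rfl <;> rcases hy with rfl | rfl <;> simp [huv]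
        exact fun hA => hA hxy
      set P : S := ⟨{u, v}, hindep, by simp⟩ with hP
      have hcard : ({u, v} : Finset ((i : Fin m) × Fin (n i))).card = 2 :=
        Finset.card_pair h
      have h1 : (indepGraphStar G).Adj
          ⟨{u}, isIndep_singleton G u, Finset.singleton_nonempty u⟩ P :=
        Or.inl ⟨by simp [hP], by simp [hP, hcard]⟩
      have h2 : (indepGraphStar G).Adj P
          ⟨{v}, isIndep_singleton G v, Finset.singleton_nonempty v⟩ :=
        Or.inr ⟨by simp [hP], by simp [hP, hcard]⟩
      exact h1.reachable.trans h2.reachable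
  have hbij : Function.Bijective F := by
    constructor
    · intro C D
      refine SimpleGraph.ConnectedComponent.ind₂ (fun A B h => ?_) C D
      have hAB : φ A = φ B := h
      obtain ⟨a, ha⟩ := A.2.2
      obtain ⟨b, hb⟩ := B.2.2
      have hab : a.1 = b.1 := by rw [← hφ A a ha, ← hφ B b hb, hAB]
      refine SimpleGraph.ConnectedComponent.sound ?_
      exact ((reach_singleton _ A a ha rfl).trans (hsing a b hab)).trans
        (reach_singleton _ B b hb rfl).symm
    · intro i
      set a : (i : Fin m) × Fin (n i) := ⟨i, ⟨0, hn i⟩⟩ with ha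
      set A : S := ⟨{a}, isIndep_singleton G a, Finset.singleton_nonempty a⟩ with hA
      refine ⟨(indepGraphStar G).connectedComponentMk A, ?_⟩
      have : φ A = a.1 := hφ A a (by simp [hA])
      exact this
  rw [Nat.card_eq_of_bijective F hbij, Nat.card_eq_fintype_card, Fintype.card_fin]
end
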